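/- Assume the stepsizes are uniform, τ_v = τ for all v ∈ V, with τ < ‖A_v‖₂⁻² for every v ∈ V. Then for any initial condition X(0) ∈ ℝ^{n×|V|}, the sequence {X(t)}_{t∈ℕ} generated by X(t+1) = ΓX(t) is bounded and satisfies lim_{t→∞} ‖X(t+1) − X(t)‖_F² = 0 (i.e., Γ is asymptotically regular). -/

import Mathlib

open Finset Filter Matrix

/-- Euclidean norm on `ℝ^k`. -/
noncomputable def enorm2 {k : ℕ} (x : Fin k → ℝ) : ℝ := Real.sqrt (∑ i, (x i) ^ 2)

/-- ℓ¹ norm on `ℝ^k`. -/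
noncomputable def onenorm {k : ℕ} (x : Fin k → ℝ) : ℝ := ∑ i, |x i|

/-- Operator norm of a matrix induced by Euclidean norms. -/
noncomputable def opNorm {m n : ℕ} (A : Matrix (Fin m) (Fin n) ℝ) : ℝ :=
  sSup {c : ℝ | ∃ z : Fin n → ℝ, z ≠ 0 ∧ c = enorm2 (A.mulVec z) / enorm2 z}

/-- Soft thresholding operator `η_α`, acting componentwise. -/
noncomputable def eta {k : ℕ} (α : ℝ) (x : Fin k → ℝ) : Fin k → ℝ :=
  fun i => if α < |x i| then Real.sign (x i) * (|x i| - α) else 0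

/-- The uniform-weights stochastic matrix adapted to the graph `E`
(`d` is the common degree). -/
noncomputable def Pmat {V : Type*} (E : V → V → Prop) [DecidableRel E] (d : ℕ) :
    V → V → ℝ := fun u w => if E u w then 1 / (d : ℝ) else 0

/-- Column `v` of `X Pᵀ`, i.e. the `P`-weighted average `∑ w P_{v,w} x_w`. -/
noncomputable def avg {n : ℕ} {V : Type*} [Fintype V] (P : V → V → ℝ)
    (X : V → Fin n → ℝ) : V → Fin n → ℝ := fun v i => ∑ w, P v w * X w i

/-- Frobenius norm of `X ∈ ℝ^{n×|V|}` (columns indexed by `V`). -/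
noncomputable def frobNorm {n : ℕ} {V : Type*} [Fintype V] (X : V → Fin n → ℝ) : ℝ :=
  Real.sqrt (∑ v, ∑ i, (X v i) ^ 2)

/-- The distributed Lasso functional `F`. -/
noncomputable def Flasso {n m : ℕ} {V : Type*} [Fintype V] (P : V → V → ℝ)
    (A : V → Matrix (Fin m) (Fin n) ℝ) (y : V → Fin m → ℝ)
    (q α : ℝ) (τ : V → ℝ) (X : V → Fin n → ℝ) : ℝ :=
  ∑ v, (q * enorm2 (y v - (A v).mulVec (X v)) ^ 2 + (2 * α / τ v) * onenorm (X v)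
    + ((1 - q) / τ v) * ∑ w, P v w * enorm2 (avg P X w - X v) ^ 2)

/-- The DISTA operator `Γ`, defined columnwise. -/
noncomputable def Gamma {n m : ℕ} {V : Type*} [Fintype V] (P : V → V → ℝ)
    (A : V → Matrix (Fin m) (Fin n) ℝ) (y : V → Fin m → ℝ)
    (q α : ℝ) (τ : V → ℝ) (X : V → Fin n → ℝ) : V → Fin n → ℝ :=
  fun v => eta α (fun i =>
    (1 - q) * avg P (avg P X) v i
      + q * (X v i + τ v * ((A v)ᵀ.mulVec (y v - (A v).mulVec (X v)) i)))

/-- The surrogate functional `F^S`. -/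
noncomputable def FS {n m : ℕ} {V : Type*} [Fintype V] (E : V → V → Prop) [DecidableRel E]
    (d : ℕ) (A : V → Matrix (Fin m) (Fin n) ℝ) (y : V → Fin m → ℝ)
    (q α : ℝ) (τ : V → ℝ) (X C B : V → Fin n → ℝ) : ℝ :=
  ∑ v, (q * enorm2 ((A v).mulVec (X v) - y v) ^ 2 + (2 * α / τ v) * onenorm (X v)
    + ((1 - q) / ((d : ℝ) * τ v)) *
        ∑ w ∈ Finset.univ.filter (fun w => E v w), enorm2 (X v - C w) ^ 2
    + (q / τ v) * enorm2 (X v - B v) ^ 2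
    - q * enorm2 ((A v).mulVec (X v - B v)) ^ 2)

/-! ### Auxiliary norm and inner-product lemmas -/

noncomputable def sqn {k : ℕ} (x : Fin k → ℝ) : ℝ := ∑ i, (x i) ^ 2
noncomputable def ip {k : ℕ} (x y : Fin k → ℝ) : ℝ := ∑ i, x i * y i

lemma sqn_nonneg {k : ℕ} (x : Fin k → ℝ) : 0 ≤ sqn x :=
  Finset.sum_nonneg fun _ _ => sq_nonneg _

lemma onenorm_nonneg {k : ℕ} (x : Fin k → ℝ) : 0 ≤ onenorm x :=
  Finset.sum_nonneg fun _ _ => abs_nonneg _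

lemma enorm2_sq {k : ℕ} (x : Fin k → ℝ) : enorm2 x ^ 2 = sqn x :=
  Real.sq_sqrt (sqn_nonneg x)

lemma enorm2_nonneg {k : ℕ} (x : Fin k → ℝ) : 0 ≤ enorm2 x := Real.sqrt_nonneg _

lemma sqn_sub {k : ℕ} (x y : Fin k → ℝ) :
    sqn (x - y) = sqn x - 2 * ip x y + sqn y := by
  simp only [sqn, ip, Pi.sub_apply, Finset.mul_sum, ← Finset.sum_sub_distrib,
    ← Finset.sum_add_distrib]
  exact Finset.sum_congr rfl fun i _ => by ring

lemma sqn_sub_comm {k : ℕ} (x y : Fin k → ℝ) : sqn (x - y) = sqn (y - x) := by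
  simp only [sqn, Pi.sub_apply]
  exact Finset.sum_congr rfl fun i _ => by ring

lemma ip_self {k : ℕ} (x : Fin k → ℝ) : ip x x = sqn x := by
  simp only [sqn, ip, sq]

lemma ip_mulVec {m n : ℕ} (A : Matrix (Fin m) (Fin n) ℝ) (z : Fin n → ℝ) (w : Fin m → ℝ) :
    ip (A.mulVec z) w = ip z (Aᵀ.mulVec w) := by
  simp only [ip, Matrix.mulVec, dotProduct, Finset.sum_mul, Finset.mul_sum,
    Matrix.transpose_apply]
  rw [Finset.sum_comm]
  exact Finset.sum_congr rfl fun i _ => Finset.sum_congr rfl fun j _ => by ring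

/-! ### The soft-thresholding prox inequality -/

lemma eta_prox_scalar {α : ℝ} (hα : 0 < α) (u z : ℝ) :
    ((if α < |u| then Real.sign u * (|u| - α) else 0) - u) ^ 2
      + 2 * α * |if α < |u| then Real.sign u * (|u| - α) else 0|
      + (z - (if α < |u| then Real.sign u * (|u| - α) else 0)) ^ 2
    ≤ (z - u) ^ 2 + 2 * α * |z| := by
  by_cases h : α < |u|
  · rcases lt_trichotomy u 0 with hu | hu | hu
    · rw [if_pos h, Real.sign_of_neg hu, abs_of_neg hu]
      have he : (-1 : ℝ) * (-u - α) = u + α := by ring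
      rw [he, abs_of_neg (by nlinarith [abs_of_neg hu] : u + α < 0)]
      nlinarith [neg_abs_le z]
    · exfalso; rw [hu, abs_zero] at h; linarith
    · rw [if_pos h, Real.sign_of_pos hu, abs_of_pos hu]
      have he : (1 : ℝ) * (u - α) = u - α := by ring
      rw [he, abs_of_pos (by nlinarith [abs_of_pos hu] : (0:ℝ) < u - α)]
      nlinarith [le_abs_self z]
  · rw [if_neg h, abs_zero]
    push_neg at h
    nlinarith [le_abs_self (z * u), abs_mul z u, abs_nonneg z,
      mul_le_mul_of_nonneg_left h (abs_nonneg z)]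

lemma eta_prox {k : ℕ} {α : ℝ} (hα : 0 < α) (u z : Fin k → ℝ) :
    sqn (eta α u - u) + 2 * α * onenorm (eta α u) + sqn (z - eta α u)
      ≤ sqn (z - u) + 2 * α * onenorm z := by
  have hL : ∀ (a b : Fin k → ℝ), sqn a + 2 * α * onenorm b
      = ∑ i, ((a i) ^ 2 + 2 * α * |b i|) := by
    intro a b
    rw [Finset.sum_add_distrib, sqn, onenorm, Finset.mul_sum]
  calc sqn (eta α u - u) + 2 * α * onenorm (eta α u) + sqn (z - eta α u)
      = ∑ i, (((eta α u - u) i) ^ 2 + 2 * α * |eta α u i| + ((z - eta α u) i) ^ 2) := by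
        rw [hL, sqn, ← Finset.sum_add_distrib]
    _ ≤ ∑ i, (((z - u) i) ^ 2 + 2 * α * |z i|) := by
        apply Finset.sum_le_sum
        intro i _
        simpa [eta] using eta_prox_scalar hα (u i) (z i)
    _ = sqn (z - u) + 2 * α * onenorm z := (hL _ _).symm

/-! ### Operator norm bound -/

lemma enorm2_pos {k : ℕ} {z : Fin k → ℝ} (hz : z ≠ 0) : 0 < enorm2 z := by
  rcases Function.ne_iff.mp hz with ⟨i, hi⟩
  apply Real.sqrt_pos.mpr
  apply Finset.sum_pos' (fun j _ => sq_nonneg _)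
  exact ⟨i, Finset.mem_univ i, (sq_nonneg _).lt_of_ne' (pow_ne_zero 2 hi)⟩

lemma enorm2_mulVec_le_frob {m n : ℕ} (A : Matrix (Fin m) (Fin n) ℝ) (z : Fin n → ℝ) :
    enorm2 (A.mulVec z) ≤ Real.sqrt (∑ j, ∑ i, (A j i) ^ 2) * enorm2 z := by
  rw [enorm2, enorm2, ← Real.sqrt_mul (show (0:ℝ) ≤ ∑ j, ∑ i, (A j i) ^ 2 from Finset.sum_nonneg fun _ _ =>
    Finset.sum_nonneg fun _ _ => sq_nonneg _)]
  apply Real.sqrt_le_sqrt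
  rw [Finset.sum_mul]
  apply Finset.sum_le_sum
  intro j _
  simpa [Matrix.mulVec, dotProduct] using
    Finset.sum_mul_sq_le_sq_mul_sq Finset.univ (fun i => A j i) z

lemma sqn_mulVec_le {m n : ℕ} (A : Matrix (Fin m) (Fin n) ℝ) (z : Fin n → ℝ) :
    sqn (A.mulVec z) ≤ opNorm A ^ 2 * sqn z := by
  by_cases hz : z = 0
  · subst hz
    rw [Matrix.mulVec_zero]
    have h0 : sqn (0 : Fin m → ℝ) = 0 := by simp [sqn]
    have h0' : sqn (0 : Fin n → ℝ) = 0 := by simp [sqn]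
    rw [h0, h0']
    simp
  · have hbdd : BddAbove {c : ℝ | ∃ z : Fin n → ℝ, z ≠ 0 ∧ c = enorm2 (A.mulVec z) / enorm2 z} := by
      refine ⟨Real.sqrt (∑ j, ∑ i, (A j i) ^ 2), ?_⟩
      rintro c ⟨w, hw, rfl⟩
      rw [div_le_iff₀ (enorm2_pos hw)]
      exact enorm2_mulVec_le_frob A w
    have hle : enorm2 (A.mulVec z) ≤ opNorm A * enorm2 z := by
      rw [← div_le_iff₀ (enorm2_pos hz)]
      exact le_csSup hbdd ⟨z, hz, rfl⟩
    calc sqn (A.mulVec z) = enorm2 (A.mulVec z) ^ 2 := (enorm2_sq _).symm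
      _ ≤ (opNorm A * enorm2 z) ^ 2 := by
          apply pow_le_pow_left₀ (enorm2_nonneg _) hle
      _ = opNorm A ^ 2 * sqn z := by rw [mul_pow, enorm2_sq]

/-! ### Per-column surrogate functional -/

noncomputable def gcol {n m : ℕ} {V : Type*} (A : Matrix (Fin m) (Fin n) ℝ) (y : Fin m → ℝ)
    (q α τ : ℝ) (d : ℕ) (N : Finset V) (C : V → Fin n → ℝ) (b z : Fin n → ℝ) : ℝ :=
  q * sqn (A.mulVec z - y) + (2 * α / τ) * onenorm z
    + ((1 - q) / ((d : ℝ) * τ)) * ∑ w ∈ N, sqn (z - C w)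
    + (q / τ) * sqn (z - b) - q * sqn (A.mulVec (z - b))

lemma gcol_eq {n m : ℕ} {V : Type*} (A : Matrix (Fin m) (Fin n) ℝ) (y : Fin m → ℝ)
    (q α τ : ℝ) (d : ℕ) (N : Finset V) (C : V → Fin n → ℝ) (b z : Fin n → ℝ)
    (hτ : τ ≠ 0) (hd : (d : ℝ) ≠ 0) (hcard : N.card = d) (u : Fin n → ℝ)
    (hu : ∀ i, u i = (1 - q) * ((∑ w ∈ N, C w i) / d)
        + q * (b i + τ * (Aᵀ.mulVec (y - A.mulVec b) i))) :
    τ * gcol A y q α τ d N C b z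
      = sqn (z - u) + 2 * α * onenorm z
        + (τ * q * sqn y + ((1 - q) / (d : ℝ)) * ∑ w ∈ N, sqn (C w) + q * sqn b
           - τ * q * sqn (A.mulVec b) - sqn u) := by
  have hipS : ip z (fun i => ∑ w ∈ N, C w i) = ∑ w ∈ N, ip z (C w) := by
    simp only [ip, Finset.mul_sum]
    exact Finset.sum_comm
  have hNs : ∑ w ∈ N, sqn (z - C w)
      = (d : ℝ) * sqn z - 2 * ip z (fun i => ∑ w ∈ N, C w i) + ∑ w ∈ N, sqn (C w) := by
    rw [hipS]
    calc ∑ w ∈ N, sqn (z - C w) = ∑ w ∈ N, (sqn z - 2 * ip z (C w) + sqn (C w)) :=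
          Finset.sum_congr rfl fun w _ => sqn_sub z (C w)
      _ = (d : ℝ) * sqn z - 2 * ∑ w ∈ N, ip z (C w) + ∑ w ∈ N, sqn (C w) := by
          rw [Finset.sum_add_distrib, Finset.sum_sub_distrib, Finset.sum_const, nsmul_eq_mul,
            Finset.mul_sum, hcard]
  have hipu : ip z u = (1 - q) / (d : ℝ) * ip z (fun i => ∑ w ∈ N, C w i) + q * ip z b
      + q * τ * ip z (Aᵀ.mulVec y) - q * τ * ip z (Aᵀ.mulVec (A.mulVec b)) := by
    have key : ∀ i, z i * u i
        = (1 - q) / (d : ℝ) * (z i * (∑ w ∈ N, C w i)) + q * (z i * b i)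
          + q * τ * (z i * (Aᵀ.mulVec y) i) - q * τ * (z i * (Aᵀ.mulVec (A.mulVec b)) i) := by
      intro i
      rw [hu i, Matrix.mulVec_sub, Pi.sub_apply]
      field_simp
      ring
    show ∑ i, z i * u i = _
    rw [Finset.sum_congr rfl fun i _ => key i, Finset.sum_sub_distrib, Finset.sum_add_distrib,
      Finset.sum_add_distrib, ← Finset.mul_sum, ← Finset.mul_sum, ← Finset.mul_sum,
      ← Finset.mul_sum]
    rfl
  rw [gcol, sqn_sub (A.mulVec z) y, Matrix.mulVec_sub A z b, sqn_sub (A.mulVec z) (A.mulVec b),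
    sqn_sub z b, sqn_sub z u, hNs, ip_mulVec A z y, ip_mulVec A z (A.mulVec b), hipu]
  field_simp
  ring

lemma gcol_prox {n m : ℕ} {V : Type*} (A : Matrix (Fin m) (Fin n) ℝ) (y : Fin m → ℝ)
    (q α τ : ℝ) (d : ℕ) (N : Finset V) (C : V → Fin n → ℝ) (b z : Fin n → ℝ)
    (hτ : 0 < τ) (hα : 0 < α) (hd : (d : ℝ) ≠ 0) (hcard : N.card = d) (u : Fin n → ℝ)
    (hu : ∀ i, u i = (1 - q) * ((∑ w ∈ N, C w i) / d)
        + q * (b i + τ * (Aᵀ.mulVec (y - A.mulVec b) i))) :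
    gcol A y q α τ d N C b (eta α u) + (1 / τ) * sqn (z - eta α u)
      ≤ gcol A y q α τ d N C b z := by
  rw [← mul_le_mul_iff_right₀ hτ]
  have h1 := gcol_eq A y q α τ d N C b z hτ.ne' hd hcard u hu
  have h2 := gcol_eq A y q α τ d N C b (eta α u) hτ.ne' hd hcard u hu
  have h3 := eta_prox hα u z
  have hτ1 : τ * (1 / τ) = 1 := by field_simp
  calc τ * (gcol A y q α τ d N C b (eta α u) + 1 / τ * sqn (z - eta α u))
      = τ * gcol A y q α τ d N C b (eta α u) + τ * (1 / τ) * sqn (z - eta α u) := by ring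
    _ = τ * gcol A y q α τ d N C b (eta α u) + sqn (z - eta α u) := by rw [hτ1, one_mul]
    _ ≤ τ * gcol A y q α τ d N C b z := by rw [h1, h2]; linarith

/-! ### Graph / stochastic matrix facts -/

section Graph

variable {V : Type*} [Fintype V] [DecidableEq V] (E : V → V → Prop) [DecidableRel E] (d : ℕ)

lemma pmat_nonneg (v w : V) : 0 ≤ Pmat E d v w := by
  unfold Pmat
  split <;> positivity

lemma pmat_symm (hsymm : ∀ u v, E u v → E v u) (v w : V) :
    Pmat E d v w = Pmat E d w v := by
  unfold Pmat
  by_cases h : E v w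
  · rw [if_pos h, if_pos (hsymm _ _ h)]
  · rw [if_neg h, if_neg fun h' => h (hsymm _ _ h')]

lemma pmat_row_sum (hreg : ∀ v, (Finset.univ.filter (fun w => E v w)).card = d)
    (hd : (d : ℝ) ≠ 0) (v : V) : ∑ w, Pmat E d v w = 1 := by
  unfold Pmat
  rw [← Finset.sum_filter, Finset.sum_const, hreg v, nsmul_eq_mul]
  field_simp

lemma pmat_weighted_sum (v : V) (f : V → ℝ) :
    ∑ w, Pmat E d v w * f w
      = (∑ w ∈ Finset.univ.filter (fun w => E v w), f w) / d := by
  unfold Pmat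
  simp only [ite_mul, zero_mul]
  rw [← Finset.sum_filter, ← Finset.mul_sum, one_div, inv_mul_eq_div]

end Graph

/-! ### Matrix-level lemmas -/

section Main

variable {n m d : ℕ} {V : Type*} [Fintype V] [DecidableEq V]
  (E : V → V → Prop) [DecidableRel E]

lemma avg_pmat_eq (C : V → Fin n → ℝ) (v : V) (i : Fin n) :
    avg (Pmat E d) C v i = (∑ w ∈ Finset.univ.filter (fun w => E v w), C w i) / d :=
  pmat_weighted_sum E d v (fun w => C w i)

lemma FS_eq (A : V → Matrix (Fin m) (Fin n) ℝ) (y : V → Fin m → ℝ)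
    (q α τ : ℝ) (X C B : V → Fin n → ℝ) :
    FS E d A y q α (fun _ => τ) X C B
      = ∑ v, gcol (A v) (y v) q α τ d (Finset.univ.filter (fun w => E v w)) C (B v) (X v) := by
  unfold FS gcol
  refine Finset.sum_congr rfl fun v _ => ?_
  simp only [enorm2_sq]

lemma mean_le (p : V → ℝ) (hp : ∀ v, 0 ≤ p v)
    (hp1 : ∑ v, p v = 1) (Z : V → Fin n → ℝ) (c : Fin n → ℝ) :
    ∑ v, p v * sqn (Z v - fun i => ∑ v', p v' * Z v' i) ≤ ∑ v, p v * sqn (Z v - c) := by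
  set mfun : Fin n → ℝ := fun i => ∑ v', p v' * Z v' i with hm
  have hswap : ∀ c' : Fin n → ℝ, ∑ v, p v * ip (Z v) c' = ip mfun c' := by
    intro c'
    simp only [ip, hm, Finset.mul_sum, Finset.sum_mul]
    rw [Finset.sum_comm]
    exact Finset.sum_congr rfl fun i _ => Finset.sum_congr rfl fun v _ => by ring
  have expand : ∀ c' : Fin n → ℝ,
      ∑ v, p v * sqn (Z v - c') = ∑ v, p v * sqn (Z v) - 2 * ip mfun c' + sqn c' := by
    intro c'
    rw [← hswap c']
    calc ∑ v, p v * sqn (Z v - c')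
        = ∑ v, (p v * sqn (Z v) - 2 * (p v * ip (Z v) c') + p v * sqn c') :=
          Finset.sum_congr rfl fun v _ => by rw [sqn_sub]; ring
      _ = ∑ v, p v * sqn (Z v) - 2 * ∑ v, p v * ip (Z v) c' + (∑ v, p v) * sqn c' := by
          rw [Finset.sum_add_distrib, Finset.sum_sub_distrib, ← Finset.mul_sum,
            ← Finset.sum_mul]
      _ = ∑ v, p v * sqn (Z v) - 2 * ∑ v, p v * ip (Z v) c' + sqn c' := by rw [hp1, one_mul]
  rw [expand c, expand mfun, ip_self]
  have h := sqn_nonneg (mfun - c)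
  rw [sqn_sub] at h
  linarith

lemma fs_descent (hreg : ∀ v, (Finset.univ.filter (fun w => E v w)).card = d)
    (hd : (d : ℝ) ≠ 0)
    (A : V → Matrix (Fin m) (Fin n) ℝ) (y : V → Fin m → ℝ)
    (q α : ℝ) (hα : 0 < α) (τ : ℝ) (hτpos : 0 < τ) (X : V → Fin n → ℝ) :
    FS E d A y q α (fun _ => τ) (Gamma (Pmat E d) A y q α (fun _ => τ) X)
        (avg (Pmat E d) X) X
      + (1 / τ) * ∑ v, sqn (X v - Gamma (Pmat E d) A y q α (fun _ => τ) X v)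
      ≤ FS E d A y q α (fun _ => τ) X (avg (Pmat E d) X) X := by
  rw [FS_eq, FS_eq, Finset.mul_sum, ← Finset.sum_add_distrib]
  apply Finset.sum_le_sum
  intro v _
  have hGv : Gamma (Pmat E d) A y q α (fun _ => τ) X v
      = eta α (fun i => (1 - q) * avg (Pmat E d) (avg (Pmat E d) X) v i
          + q * (X v i + τ * ((A v)ᵀ.mulVec (y v - (A v).mulVec (X v)) i))) := rfl
  rw [hGv]
  exact gcol_prox (A v) (y v) q α τ d _ (avg (Pmat E d) X) (X v) (X v) hτpos hα hd (hreg v)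
    _ (fun i => by rw [avg_pmat_eq])

lemma FS_self (A : V → Matrix (Fin m) (Fin n) ℝ) (y : V → Fin m → ℝ)
    (q α τ : ℝ) (X : V → Fin n → ℝ) :
    FS E d A y q α (fun _ => τ) X (avg (Pmat E d) X) X
      = Flasso (Pmat E d) A y q α (fun _ => τ) X := by
  rw [FS_eq]
  unfold Flasso
  refine Finset.sum_congr rfl fun v _ => ?_
  simp only [enorm2_sq, gcol]
  have e1 : sqn ((A v).mulVec (X v) - y v) = sqn (y v - (A v).mulVec (X v)) :=
    sqn_sub_comm _ _
  have e2 : X v - X v = (0 : Fin n → ℝ) := sub_self _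
  have e3 : sqn (0 : Fin n → ℝ) = 0 := by simp [sqn]
  have e4 : (A v).mulVec (0 : Fin n → ℝ) = 0 := Matrix.mulVec_zero _
  have e3' : sqn (0 : Fin m → ℝ) = 0 := by simp [sqn]
  have e5 : ∑ w, Pmat E d v w * sqn (avg (Pmat E d) X w - X v)
      = (∑ w ∈ Finset.univ.filter (fun w => E v w), sqn (avg (Pmat E d) X w - X v)) / d :=
    pmat_weighted_sum E d v _
  have e6 : ∑ w ∈ Finset.univ.filter (fun w => E v w), sqn (X v - avg (Pmat E d) X w)
      = ∑ w ∈ Finset.univ.filter (fun w => E v w), sqn (avg (Pmat E d) X w - X v) :=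
    Finset.sum_congr rfl fun w _ => sqn_sub_comm _ _
  rw [e1, e2, e3, e4, e3', e5, e6]
  ring

lemma flasso_le_FS (hsymm : ∀ u v, E u v → E v u)
    (hreg : ∀ v, (Finset.univ.filter (fun w => E v w)).card = d)
    (hd : (d : ℝ) ≠ 0)
    (A : V → Matrix (Fin m) (Fin n) ℝ) (y : V → Fin m → ℝ)
    (q α : ℝ) (hq0 : 0 < q) (hq1 : q < 1) (τ : ℝ) (hτpos : 0 < τ)
    (hτop : ∀ v, opNorm (A v) ^ 2 * τ ≤ 1)
    (X Z : V → Fin n → ℝ) :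
    Flasso (Pmat E d) A y q α (fun _ => τ) Z
      ≤ FS E d A y q α (fun _ => τ) Z (avg (Pmat E d) X) X := by
  have hcons : ∑ v, ∑ w, Pmat E d v w * sqn (avg (Pmat E d) Z w - Z v)
      ≤ ∑ v, ∑ w, Pmat E d v w * sqn (Z v - avg (Pmat E d) X w) := by
    calc ∑ v, ∑ w, Pmat E d v w * sqn (avg (Pmat E d) Z w - Z v)
        = ∑ w, ∑ v, Pmat E d v w * sqn (avg (Pmat E d) Z w - Z v) := Finset.sum_comm
      _ ≤ ∑ w, ∑ v, Pmat E d v w * sqn (Z v - avg (Pmat E d) X w) := by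
          apply Finset.sum_le_sum
          intro w _
          have step1 : ∑ v, Pmat E d v w * sqn (avg (Pmat E d) Z w - Z v)
              = ∑ v, Pmat E d w v * sqn (Z v - avg (Pmat E d) Z w) :=
            Finset.sum_congr rfl fun v _ => by
              rw [pmat_symm E d hsymm v w, sqn_sub_comm]
          have step3 : ∑ v, Pmat E d w v * sqn (Z v - avg (Pmat E d) X w)
              = ∑ v, Pmat E d v w * sqn (Z v - avg (Pmat E d) X w) :=
            Finset.sum_congr rfl fun v _ => by rw [pmat_symm E d hsymm w v]
          rw [step1, ← step3]
          exact mean_le (fun v' => Pmat E d w v') (fun v' => pmat_nonneg E d w v')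
            (pmat_row_sum E d hreg hd w) Z (avg (Pmat E d) X w)
      _ = ∑ v, ∑ w, Pmat E d v w * sqn (Z v - avg (Pmat E d) X w) := Finset.sum_comm
  have hflasso : Flasso (Pmat E d) A y q α (fun _ => τ) Z
      = ∑ v, (q * sqn ((A v).mulVec (Z v) - y v) + (2 * α / τ) * onenorm (Z v))
        + ((1 - q) / τ) * ∑ v, ∑ w, Pmat E d v w * sqn (avg (Pmat E d) Z w - Z v) := by
    unfold Flasso
    rw [Finset.mul_sum, ← Finset.sum_add_distrib]
    refine Finset.sum_congr rfl fun v _ => ?_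
    simp only [enorm2_sq]
    rw [sqn_sub_comm (y v)]
  have hFS : FS E d A y q α (fun _ => τ) Z (avg (Pmat E d) X) X
      = ∑ v, (q * sqn ((A v).mulVec (Z v) - y v) + (2 * α / τ) * onenorm (Z v))
        + ((1 - q) / τ) * ∑ v, ∑ w, Pmat E d v w * sqn (Z v - avg (Pmat E d) X w)
        + ∑ v, ((q / τ) * sqn (Z v - X v) - q * sqn ((A v).mulVec (Z v - X v))) := by
    rw [FS_eq, Finset.mul_sum, ← Finset.sum_add_distrib, ← Finset.sum_add_distrib]
    refine Finset.sum_congr rfl fun v _ => ?_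
    simp only [gcol]
    rw [pmat_weighted_sum E d v (fun w => sqn (Z v - avg (Pmat E d) X w))]
    ring
  have hextra : ∀ v, 0 ≤ (q / τ) * sqn (Z v - X v) - q * sqn ((A v).mulVec (Z v - X v)) := by
    intro v
    have hopv := sqn_mulVec_le (A v) (Z v - X v)
    have hs := sqn_nonneg (Z v - X v)
    have key : 0 ≤ q * sqn (Z v - X v) - τ * (q * sqn ((A v).mulVec (Z v - X v))) := by
      nlinarith [mul_nonneg (mul_nonneg hq0.le hs) (sub_nonneg.mpr (hτop v)),
        mul_le_mul_of_nonneg_left hopv (mul_nonneg hτpos.le hq0.le)]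
    have heq : (q / τ) * sqn (Z v - X v) - q * sqn ((A v).mulVec (Z v - X v))
        = (1 / τ) * (q * sqn (Z v - X v) - τ * (q * sqn ((A v).mulVec (Z v - X v)))) := by
      field_simp
    rw [heq]
    positivity
  have hq1' : 0 ≤ (1 - q) / τ := div_nonneg (by linarith) hτpos.le
  have hsum : 0 ≤ ∑ v, ((q / τ) * sqn (Z v - X v) - q * sqn ((A v).mulVec (Z v - X v))) :=
    Finset.sum_nonneg fun v _ => hextra v
  rw [hflasso, hFS]
  have := mul_le_mul_of_nonneg_left hcons hq1'
  linarith

lemma key_descent (hsymm : ∀ u v, E u v → E v u)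
    (hreg : ∀ v, (Finset.univ.filter (fun w => E v w)).card = d)
    (hd : (d : ℝ) ≠ 0)
    (A : V → Matrix (Fin m) (Fin n) ℝ) (y : V → Fin m → ℝ)
    (q α : ℝ) (hq0 : 0 < q) (hq1 : q < 1) (hα : 0 < α) (τ : ℝ) (hτpos : 0 < τ)
    (hτop : ∀ v, opNorm (A v) ^ 2 * τ ≤ 1)
    (X : V → Fin n → ℝ) :
    Flasso (Pmat E d) A y q α (fun _ => τ) (Gamma (Pmat E d) A y q α (fun _ => τ) X)
        + (1 / τ) * ∑ v, sqn (Gamma (Pmat E d) A y q α (fun _ => τ) X v - X v)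
      ≤ Flasso (Pmat E d) A y q α (fun _ => τ) X := by
  have h1 := fs_descent E hreg hd A y q α hα τ hτpos X
  have h2 := FS_self (d := d) E A y q α τ X
  have h3 := flasso_le_FS E hsymm hreg hd A y q α hq0 hq1 τ hτpos hτop X
    (Gamma (Pmat E d) A y q α (fun _ => τ) X)
  have hflip : ∑ v, sqn (Gamma (Pmat E d) A y q α (fun _ => τ) X v - X v)
      = ∑ v, sqn (X v - Gamma (Pmat E d) A y q α (fun _ => τ) X v) :=
    Finset.sum_congr rfl fun v _ => sqn_sub_comm _ _
  rw [hflip]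
  linarith

lemma flasso_lb (A : V → Matrix (Fin m) (Fin n) ℝ) (y : V → Fin m → ℝ)
    (q α : ℝ) (hq0 : 0 < q) (hq1 : q < 1) (hα : 0 < α) (τ : ℝ) (hτpos : 0 < τ)
    (X : V → Fin n → ℝ) :
    (2 * α / τ) * ∑ v, onenorm (X v) ≤ Flasso (Pmat E d) A y q α (fun _ => τ) X := by
  unfold Flasso
  rw [Finset.mul_sum]
  apply Finset.sum_le_sum
  intro v _
  have h1 : 0 ≤ q * enorm2 (y v - (A v).mulVec (X v)) ^ 2 :=
    mul_nonneg hq0.le (sq_nonneg _)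
  have h2 : 0 ≤ ((1 - q) / τ) * ∑ w, Pmat E d v w * enorm2 (avg (Pmat E d) X w - X v) ^ 2 :=
    mul_nonneg (div_nonneg (by linarith) hτpos.le)
      (Finset.sum_nonneg fun w _ => mul_nonneg (pmat_nonneg E d v w) (sq_nonneg _))
  linarith

end Main

/-! ### Generic sum inequalities -/

lemma sum_sq_le_sq_sum {ι : Type*} (s : Finset ι) (f : ι → ℝ) (hf : ∀ j ∈ s, 0 ≤ f j) :
    ∑ j ∈ s, f j ^ 2 ≤ (∑ j ∈ s, f j) ^ 2 := by
  rw [sq]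
  calc ∑ j ∈ s, f j ^ 2 = ∑ j ∈ s, f j * f j := by
        refine Finset.sum_congr rfl fun j _ => sq (f j) ▸ by ring
    _ ≤ ∑ j ∈ s, f j * ∑ k ∈ s, f k := Finset.sum_le_sum fun j hj =>
        mul_le_mul_of_nonneg_left (Finset.single_le_sum hf hj) (hf j hj)
    _ = (∑ j ∈ s, f j) * ∑ j ∈ s, f j := by rw [← Finset.sum_mul]

lemma frob_sq {n : ℕ} {V : Type*} [Fintype V] (Y : V → Fin n → ℝ) :
    frobNorm Y ^ 2 = ∑ v, sqn (Y v) :=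
  Real.sq_sqrt (Finset.sum_nonneg fun v _ => sqn_nonneg (Y v))

lemma frob_le_sum_onenorm {n : ℕ} {V : Type*} [Fintype V] (Y : V → Fin n → ℝ) :
    frobNorm Y ≤ ∑ v, onenorm (Y v) := by
  have h1 : ∑ v, ∑ i, (Y v i) ^ 2 = ∑ p : V × Fin n, (Y p.1 p.2) ^ 2 := by
    rw [Fintype.sum_prod_type]
  have h2 : ∑ v, onenorm (Y v) = ∑ p : V × Fin n, |Y p.1 p.2| := by
    rw [Fintype.sum_prod_type]
    rfl
  have h3 : ∑ p : V × Fin n, (Y p.1 p.2) ^ 2 ≤ (∑ p : V × Fin n, |Y p.1 p.2|) ^ 2 := by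
    calc ∑ p : V × Fin n, (Y p.1 p.2) ^ 2 = ∑ p : V × Fin n, |Y p.1 p.2| ^ 2 := by
          refine Finset.sum_congr rfl fun p _ => (sq_abs _).symm
      _ ≤ (∑ p : V × Fin n, |Y p.1 p.2|) ^ 2 :=
          sum_sq_le_sq_sum _ _ fun p _ => abs_nonneg _
  calc frobNorm Y = Real.sqrt (∑ v, ∑ i, (Y v i) ^ 2) := rfl
    _ ≤ Real.sqrt ((∑ p : V × Fin n, |Y p.1 p.2|) ^ 2) := Real.sqrt_le_sqrt (h1 ▸ h3)
    _ = ∑ p : V × Fin n, |Y p.1 p.2| :=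
        Real.sqrt_sq (Finset.sum_nonneg fun p _ => abs_nonneg _)
    _ = ∑ v, onenorm (Y v) := h2.symm

/-- Proposition 7: asymptotic regularity. With uniform stepsizes
`τ < ‖A_v‖₂⁻²` for every `v`, the DISTA sequence `X(t+1) = ΓX(t)` is bounded and satisfies
`‖X(t+1) − X(t)‖_F² → 0`. -/
theorem dista_asymptotically_regular
    {n m d : ℕ} {V : Type*} [Fintype V] [DecidableEq V] [Nonempty V]
    (E : V → V → Prop) [DecidableRel E]
    (hself : ∀ v, E v v) (hsymm : ∀ u v, E u v → E v u)
    (hreg : ∀ v, (Finset.univ.filter (fun w => E v w)).card = d)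
    (A : V → Matrix (Fin m) (Fin n) ℝ) (y : V → Fin m → ℝ)
    (q α : ℝ) (hq0 : 0 < q) (hq1 : q < 1) (hα : 0 < α)
    (τ : ℝ) (hτpos : 0 < τ)
    (hτ : ∀ v, τ < (opNorm (A v) ^ 2)⁻¹)
    (X0 : V → Fin n → ℝ) :
    (∃ R : ℝ, ∀ t : ℕ, frobNorm ((Gamma (Pmat E d) A y q α (fun _ => τ))^[t] X0) ≤ R)
      ∧ Filter.Tendsto (fun t : ℕ =>
          frobNorm ((Gamma (Pmat E d) A y q α (fun _ => τ))^[t + 1] X0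
            - (Gamma (Pmat E d) A y q α (fun _ => τ))^[t] X0) ^ 2)
          Filter.atTop (nhds 0) := by
  obtain ⟨v0⟩ := (inferInstance : Nonempty V)
  have hd0 : 0 < d := by
    rw [← hreg v0]
    exact Finset.card_pos.mpr ⟨v0, Finset.mem_filter.mpr ⟨Finset.mem_univ _, hself v0⟩⟩
  have hdR : ((d : ℕ) : ℝ) ≠ 0 := Nat.cast_ne_zero.mpr hd0.ne'
  have hτop : ∀ v, opNorm (A v) ^ 2 * τ ≤ 1 := by
    intro v
    have hs0 : (0 : ℝ) ≤ opNorm (A v) ^ 2 := sq_nonneg _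
    rcases eq_or_lt_of_le hs0 with h | h
    · rw [← h, zero_mul]; norm_num
    · have h2 : opNorm (A v) ^ 2 * τ < opNorm (A v) ^ 2 * (opNorm (A v) ^ 2)⁻¹ :=
        mul_lt_mul_of_pos_left (hτ v) h
      rw [mul_inv_cancel₀ h.ne'] at h2
      exact h2.le
  set Γ : (V → Fin n → ℝ) → (V → Fin n → ℝ) := Gamma (Pmat E d) A y q α (fun _ => τ) with hΓ
  set Fl : (V → Fin n → ℝ) → ℝ := Flasso (Pmat E d) A y q α (fun _ => τ) with hFl
  have hdesc : ∀ X, Fl (Γ X) + (1 / τ) * ∑ v, sqn (Γ X v - X v) ≤ Fl X := fun X =>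
    key_descent E hsymm hreg hdR A y q α hq0 hq1 hα τ hτpos hτop X
  have hlb : ∀ X, (2 * α / τ) * ∑ v, onenorm (X v) ≤ Fl X := fun X =>
    flasso_lb E A y q α hq0 hq1 hα τ hτpos X
  have hFnn : ∀ X, (0 : ℝ) ≤ Fl X := by
    intro X
    have h1 := hlb X
    have h2 : 0 ≤ (2 * α / τ) * ∑ v, onenorm (X v) :=
      mul_nonneg (by positivity) (Finset.sum_nonneg fun v _ => onenorm_nonneg _)
    linarith
  have hstep : ∀ t : ℕ, Γ^[t + 1] X0 = Γ (Γ^[t] X0) := fun t =>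
    Function.iterate_succ_apply' Γ t X0
  have hSnn : ∀ t : ℕ, 0 ≤ ∑ v, sqn (Γ (Γ^[t] X0) v - Γ^[t] X0 v) := fun t =>
    Finset.sum_nonneg fun v _ => sqn_nonneg _
  have hτinv : 0 < 1 / τ := by positivity
  have hsucc : ∀ t : ℕ, Fl (Γ^[t + 1] X0) ≤ Fl (Γ^[t] X0) := by
    intro t
    rw [hstep t]
    have h1 := hdesc (Γ^[t] X0)
    nlinarith [hSnn t]
  have hanti : Antitone (fun t => Fl (Γ^[t] X0)) := antitone_nat_of_succ_le hsucc
  constructor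
  · refine ⟨(τ / (2 * α)) * Fl X0, fun t => ?_⟩
    have h1 : Fl (Γ^[t] X0) ≤ Fl X0 := by
      have := hanti (Nat.zero_le t)
      simpa using this
    have h2 := hlb (Γ^[t] X0)
    have h3 := frob_le_sum_onenorm (Γ^[t] X0)
    have h4 : ∑ v, onenorm (Γ^[t] X0 v) ≤ (τ / (2 * α)) * Fl X0 := by
      have hc : 0 < 2 * α / τ := by positivity
      have h5 : (2 * α / τ) * ∑ v, onenorm (Γ^[t] X0 v) ≤ Fl X0 := le_trans h2 h1
      rw [← le_div_iff₀' hc] at h5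
      calc ∑ v, onenorm (Γ^[t] X0 v) ≤ Fl X0 / (2 * α / τ) := h5
        _ = (τ / (2 * α)) * Fl X0 := by
            field_simp
    linarith
  · -- convergence of Fl values
    have hbdd : BddBelow (Set.range fun t => Fl (Γ^[t] X0)) :=
      ⟨0, fun x ⟨t, ht⟩ => ht ▸ hFnn _⟩
    have hFconv : Filter.Tendsto (fun t => Fl (Γ^[t] X0)) Filter.atTop
        (nhds (⨅ t, Fl (Γ^[t] X0))) := tendsto_atTop_ciInf hanti hbdd
    have hshift : Filter.Tendsto (fun t => Fl (Γ^[t + 1] X0)) Filter.atTop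
        (nhds (⨅ t, Fl (Γ^[t] X0))) :=
      hFconv.comp (Filter.tendsto_add_atTop_nat 1)
    have hdiff : Filter.Tendsto
        (fun t => τ * (Fl (Γ^[t] X0) - Fl (Γ^[t + 1] X0))) Filter.atTop (nhds 0) := by
      have := (hFconv.sub hshift).const_mul τ
      simpa using this
    apply squeeze_zero (fun t => sq_nonneg _) _ hdiff
    intro t
    have hfs : frobNorm (Γ^[t + 1] X0 - Γ^[t] X0) ^ 2
        = ∑ v, sqn (Γ (Γ^[t] X0) v - Γ^[t] X0 v) := by
      rw [frob_sq]
      exact Finset.sum_congr rfl fun v _ => by rw [hstep t]; rfl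
    rw [hfs]
    have h1 := hdesc (Γ^[t] X0)
    rw [← hstep t] at h1
    have h2 : (1 / τ) * ∑ v, sqn (Γ (Γ^[t] X0) v - Γ^[t] X0 v)
        ≤ Fl (Γ^[t] X0) - Fl (Γ^[t + 1] X0) := by
      rw [hstep t]
      have := hdesc (Γ^[t] X0)
      linarith
    calc ∑ v, sqn (Γ (Γ^[t] X0) v - Γ^[t] X0 v)
        = τ * ((1 / τ) * ∑ v, sqn (Γ (Γ^[t] X0) v - Γ^[t] X0 v)) := by
          field_simp
      _ ≤ τ * (Fl (Γ^[t] X0) - Fl (Γ^[t + 1] X0)) :=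
          mul_le_mul_of_nonneg_left h2 hτpos.le
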